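/- arXiv:2403.11493 — 5 statements merged into one kernel-verified Lean document; each statement's English description precedes it below -/
import Mathlib

section
/- Let J : H → H be firmly non-expansive, B : H → H monotone and L-Lipschitz, and λ, β > 0 with λβL < 1. Define C := I - λβB and h(x) := C(J(Cx)) - Cx. Then ‖h(x) - h(y)‖ ≤ √6 ‖x - y‖ for all x, y ∈ H. -/
open RealInnerProductSpace

private lemma fbf_aux (c sv : ℝ) (h0 : 0 < sv) (h1 : sv < 1) (hc : 0 ≤ c) :
    (1 + 2 * sv) * ((1 + sv ^ 2) * c) ≤ 6 * c := by
  have key : (1 + 2 * sv) * (1 + sv ^ 2) ≤ 6 := by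
    nlinarith [sq_nonneg sv, sq_nonneg (1 - sv), mul_pos h0 h0]
  calc (1 + 2 * sv) * ((1 + sv ^ 2) * c) = ((1 + 2 * sv) * (1 + sv ^ 2)) * c := by ring
    _ ≤ 6 * c := mul_le_mul_of_nonneg_right key hc

theorem fbf_operator_sqrt6_lipschitz
    {H : Type*} [NormedAddCommGroup H] [InnerProductSpace ℝ H]
    (J : H → H) (hJ : ∀ x y : H, ‖J x - J y‖ ^ 2 ≤ ⟪x - y, J x - J y⟫)
    (B : H → H) (hBmono : ∀ x y : H, 0 ≤ ⟪B x - B y, x - y⟫)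
    (L : ℝ) (hLpos : 0 < L) (hB : ∀ x y : H, ‖B x - B y‖ ≤ L * ‖x - y‖)
    (lam beta : ℝ) (hlam : 0 < lam) (hbeta : 0 < beta) (hlb : lam * beta * L < 1)
    (C : H → H) (hC : ∀ x : H, C x = x - (lam * beta) • B x)
    (h : H → H) (hh : ∀ x : H, h x = C (J (C x)) - C x) :
    ∀ x y : H, ‖h x - h y‖ ≤ Real.sqrt 6 * ‖x - y‖ := by
  intro x y
  set t := lam * beta with ht
  have htpos : 0 < t := mul_pos hlam hbeta
  have hspos : 0 < t * L := mul_pos htpos hLpos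
  have hs1 : t * L < 1 := hlb
  set d := x - y with hd
  set u := C x with hu
  set v := C y with hv
  set p := J u - J v with hp
  set q := u - v with hq
  set r := t • (B (J u) - B (J v)) with hr
  -- decomposition of h x - h y
  have hhd : h x - h y = (p - q) - r := by
    rw [hh, hh, hC (J u), hC (J v), hr, hp, hq, smul_sub]
    abel
  -- q in terms of d
  have hqd : q = d - t • (B x - B y) := by
    rw [hq, hu, hv, hC, hC, hd, smul_sub]
    abel
  -- basic facts
  have hp2 : ‖p‖ ^ 2 ≤ ⟪q, p⟫ := hJ u v
  have hCS : ⟪q, p⟫ ≤ ‖q‖ * ‖p‖ := real_inner_le_norm q p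
  have hple : ‖p‖ ≤ ‖q‖ := by nlinarith [norm_nonneg p, norm_nonneg q]
  have hrle : ‖r‖ ≤ (t * L) * ‖p‖ := by
    rw [hr, norm_smul, Real.norm_eq_abs, abs_of_pos htpos]
    have := hB (J u) (J v)
    calc t * ‖B (J u) - B (J v)‖ ≤ t * (L * ‖p‖) := by
          exact mul_le_mul_of_nonneg_left (by rw [hp]; exact this) htpos.le
      _ = (t * L) * ‖p‖ := by ring
  have hpr : 0 ≤ ⟪p, r⟫ := by
    rw [hr, real_inner_smul_right]
    have := hBmono (J u) (J v)
    rw [real_inner_comm] at this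
    exact mul_nonneg htpos.le (by rw [hp]; exact this)
  have hqr : ⟪q, r⟫ ≤ ‖q‖ * ‖r‖ := real_inner_le_norm q r
  have hrq : ‖r‖ ≤ (t * L) * ‖q‖ :=
    hrle.trans (mul_le_mul_of_nonneg_left hple hspos.le)
  -- bound on ‖q‖
  have hq2 : ‖q‖ ^ 2 ≤ (1 + (t * L) ^ 2) * ‖d‖ ^ 2 := by
    have hexp : ‖q‖ ^ 2 = ‖d‖ ^ 2 - 2 * ⟪d, t • (B x - B y)⟫ + ‖t • (B x - B y)‖ ^ 2 := by
      rw [hqd]; exact norm_sub_sq_real d _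
    have hin : 0 ≤ ⟪d, t • (B x - B y)⟫ := by
      rw [real_inner_smul_right]
      have := hBmono x y
      rw [real_inner_comm] at this
      exact mul_nonneg htpos.le this
    have hnB : ‖t • (B x - B y)‖ ≤ (t * L) * ‖d‖ := by
      rw [norm_smul, Real.norm_eq_abs, abs_of_pos htpos]
      calc t * ‖B x - B y‖ ≤ t * (L * ‖d‖) := by
            exact mul_le_mul_of_nonneg_left (hB x y) htpos.le
        _ = (t * L) * ‖d‖ := by ring
    nlinarith [norm_nonneg (t • (B x - B y)), norm_nonneg d]
  -- expand the norm of h x - h y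
  have e1 : ⟪p - q, r⟫ = ⟪p, r⟫ - ⟪q, r⟫ := inner_sub_left p q r
  have hexp2 : ‖h x - h y‖ ^ 2
      = ‖p‖ ^ 2 - 2 * ⟪p, q⟫ + ‖q‖ ^ 2 - 2 * (⟪p, r⟫ - ⟪q, r⟫) + ‖r‖ ^ 2 := by
    rw [hhd, norm_sub_sq_real (p - q) r, norm_sub_sq_real p q, e1]
  have hpq : ⟪p, q⟫ = ⟪q, p⟫ := real_inner_comm q p
  have hr2 : ‖r‖ ^ 2 ≤ (t * L) ^ 2 * ‖p‖ ^ 2 := by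
    nlinarith [hrle, norm_nonneg r, mul_nonneg hspos.le (norm_nonneg p)]
  have hqrb : ⟪q, r⟫ ≤ (t * L) * ‖q‖ ^ 2 := by
    have := mul_le_mul_of_nonneg_left hrq (norm_nonneg q)
    calc ⟪q, r⟫ ≤ ‖q‖ * ‖r‖ := hqr
      _ ≤ ‖q‖ * (t * L * ‖q‖) := this
      _ = (t * L) * ‖q‖ ^ 2 := by ring
  have hs2le : (t * L) ^ 2 ≤ 1 := by
    have h2 : (t * L) ^ 2 ≤ 1 ^ 2 := by
      apply pow_le_pow_left₀ hspos.le hs1.le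
    simpa using h2
  have main : ‖h x - h y‖ ^ 2 ≤ (1 + 2 * (t * L)) * ‖q‖ ^ 2 := by
    rw [hexp2, hpq]
    linarith [hp2, hpr, hqrb, hr2, mul_le_mul_of_nonneg_right hs2le (sq_nonneg ‖p‖)]
  have hfac : (1 + 2 * (t * L)) * ((1 + (t * L) ^ 2) * ‖d‖ ^ 2) ≤ 6 * ‖d‖ ^ 2 :=
    fbf_aux _ _ hspos hs1 (sq_nonneg _)
  have h6 : ‖h x - h y‖ ^ 2 ≤ 6 * ‖d‖ ^ 2 := by
    refine main.trans ((mul_le_mul_of_nonneg_left hq2 (by positivity)).trans hfac)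
  calc ‖h x - h y‖ = Real.sqrt (‖h x - h y‖ ^ 2) := by
        rw [Real.sqrt_sq (norm_nonneg _)]
    _ ≤ Real.sqrt (6 * ‖d‖ ^ 2) := Real.sqrt_le_sqrt h6
    _ = Real.sqrt 6 * ‖d‖ := by
        rw [Real.sqrt_mul (by norm_num), Real.sqrt_sq (norm_nonneg _)]
    _ = Real.sqrt 6 * ‖x - y‖ := by rw [hd]
end

section
/- Let J : H → H be firmly non-expansive, B : H → H be L-Lipschitz, and λ, β > 0. With C := I - λβB, one has ‖C(J(Cx)) - C(J(Cy))‖² ≤ (1 + λ²β²L²)⟨Cx - Cy, J(Cx) - J(Cy)⟩ - 2λβ⟨J(Cx) - J(Cy), B(J(Cx)) - B(J(Cy))⟩ for all x, y ∈ H. -/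
open RealInnerProductSpace

theorem fbf_composition_estimate
    {H : Type*} [NormedAddCommGroup H] [InnerProductSpace ℝ H]
    (J : H → H) (hJ : ∀ x y : H, ‖J x - J y‖ ^ 2 ≤ ⟪x - y, J x - J y⟫)
    (B : H → H) (L : ℝ) (hB : ∀ x y : H, ‖B x - B y‖ ≤ L * ‖x - y‖)
    (lam beta : ℝ) (hlam : 0 < lam) (hbeta : 0 < beta)
    (C : H → H) (hC : ∀ x : H, C x = x - (lam * beta) • B x) :
    ∀ x y : H, ‖C (J (C x)) - C (J (C y))‖ ^ 2
      ≤ (1 + lam ^ 2 * beta ^ 2 * L ^ 2) * ⟪C x - C y, J (C x) - J (C y)⟫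
        - 2 * (lam * beta) * ⟪J (C x) - J (C y), B (J (C x)) - B (J (C y))⟫ := by
  intro x y
  set u := J (C x) - J (C y) with hu
  set v := B (J (C x)) - B (J (C y)) with hv
  have hcd : C (J (C x)) - C (J (C y)) = u - (lam * beta) • v := by
    rw [hC (J (C x)), hC (J (C y)), hu, hv, smul_sub]; abel
  have hnormv : ‖v‖ ≤ L * ‖u‖ := hB _ _
  have hv2 : ‖v‖ ^ 2 ≤ L ^ 2 * ‖u‖ ^ 2 := by
    nlinarith [norm_nonneg v, hnormv]
  have hJu : ‖u‖ ^ 2 ≤ ⟪C x - C y, u⟫ := hJ _ _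
  have hexp : ‖u - (lam * beta) • v‖ ^ 2
      = ‖u‖ ^ 2 - 2 * (lam * beta) * ⟪u, v⟫ + (lam * beta) ^ 2 * ‖v‖ ^ 2 := by
    rw [norm_sub_sq_real, norm_smul, real_inner_smul_right]
    simp [abs_mul, abs_of_pos hlam, abs_of_pos hbeta]
    ring
  rw [hcd, hexp]
  have hcoef : (0:ℝ) ≤ lam ^ 2 * beta ^ 2 := by positivity
  nlinarith [hJu, hv2, mul_le_mul_of_nonneg_left hv2 hcoef, mul_le_mul_of_nonneg_left hJu (mul_nonneg hcoef (sq_nonneg L))]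
end

section
/- Let f : K × K → ℝ be an upper hemicontinuous equilibrium bifunction (f(x,x)=0, f(x,·) convex and lower semicontinuous, and lim_{t→0⁺} f(tz+(1-t)x, y) ≤ f(x,y)). If x ∈ K satisfies f(y,x) ≤ 0 for all y ∈ K, then f(x,y) ≥ 0 for all y ∈ K. -/
open Filter

theorem dep_solution_solves_ep
    {H : Type*} [NormedAddCommGroup H] [InnerProductSpace ℝ H]
    (K : Set H) (hK : K.Nonempty) (hKc : IsClosed K) (hKconv : Convex ℝ K)
    (f : H → H → ℝ)
    (heq : ∀ x ∈ K, f x x = 0)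
    (hconv : ∀ x ∈ K, ConvexOn ℝ K (f x))
    (hlsc : ∀ x ∈ K, LowerSemicontinuousOn (f x) K)
    (hhemi : ∀ x₁ ∈ K, ∀ x₂ ∈ K, ∀ y ∈ K,
      Filter.limsup (fun t : ℝ => f (t • x₁ + (1 - t) • x₂) y) (nhdsWithin 0 (Set.Ioi 0))
        ≤ f x₂ y)
    (x : H) (hx : x ∈ K) (hDEP : ∀ y ∈ K, f y x ≤ 0) :
    ∀ y ∈ K, 0 ≤ f x y := by
  intro y hy
  set u : ℝ → ℝ := fun t => f (t • y + (1 - t) • x) y with hu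
  set l : Filter ℝ := nhdsWithin 0 (Set.Ioi 0) with hl
  -- key positivity on (0,1)
  have hpos : ∀ t ∈ Set.Ioo (0:ℝ) 1, 0 ≤ u t := by
    intro t ht
    have ht0 : 0 < t := ht.1
    have ht1 : t < 1 := ht.2
    have hxt : t • y + (1 - t) • x ∈ K :=
      hKconv hy hx ht0.le (by linarith) (by ring)
    have h0 : f (t • y + (1 - t) • x) (t • y + (1 - t) • x) = 0 := heq _ hxt
    have hc := (hconv _ hxt).2 hy hx ht0.le (by linarith : (0:ℝ) ≤ 1 - t) (by ring)
    rw [h0] at hc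
    simp only [smul_eq_mul] at hc
    show (0:ℝ) ≤ f (t • y + (1 - t) • x) y
    have hle : f (t • y + (1 - t) • x) x ≤ 0 := hDEP _ hxt
    nlinarith [mul_nonneg (by linarith : (0:ℝ) ≤ 1 - t) (neg_nonneg.mpr hle)]
  have hev : ∀ᶠ t in l, 0 ≤ u t := by
    have hmem : Set.Ioo (0:ℝ) 1 ∈ l := by
      rw [hl]
      have : Set.Ioo (0:ℝ) 1 = Set.Ioi 0 ∩ Set.Iio 1 := by
        ext t; simp [Set.mem_Ioo]
      rw [this]
      exact inter_mem_nhdsWithin _ (Iio_mem_nhds one_pos)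
    filter_upwards [hmem] with t ht using hpos t ht
  have hlim : limsup u l ≤ f x y := hhemi y hy x hx y hy
  by_cases hb : IsBoundedUnder (· ≤ ·) l u
  · have : (0:ℝ) ≤ limsup u l :=
      le_limsup_of_frequently_le (hev.frequently) hb
    linarith
  · -- unbounded: limsup = sInf ∅ = 0 in ℝ
    have hempty : { a : ℝ | ∀ᶠ n in l, u n ≤ a } = ∅ := by
      ext a
      simp only [Set.mem_setOf_eq, Set.mem_empty_iff_false, iff_false]
      intro ha
      exact hb ⟨a, ha⟩
    have : limsup u l = 0 := by
      rw [limsup_eq, hempty, Real.sInf_empty]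
    linarith
end

section
/- (Discrete Opial lemma) Let C be a nonempty subset of a real Hilbert space H and (x_n) a sequence in H such that (i) for every x ∈ C the limit lim_{n→∞} ‖x_n - x‖ exists, and (ii) every weak sequential cluster point of (x_n) belongs to C. Then (x_n) converges weakly to a point of C. -/
open Filter RealInnerProductSpace

private lemma weak_bw
    {H : Type*} [NormedAddCommGroup H] [InnerProductSpace ℝ H] [CompleteSpace H]
    (x : ℕ → H) (M : ℝ) (hM : ∀ n, ‖x n‖ ≤ M) :
    ∃ z : H, ∃ φ : ℕ → ℕ, StrictMono φ ∧
      ∀ y : H, Tendsto (fun k => ⟪x (φ k), y⟫) atTop (nhds ⟪z, y⟫) := by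
  set M0 : ℝ := max M 1 with hM0def
  have hM0pos : (0:ℝ) < M0 := lt_of_lt_of_le one_pos (le_max_right _ _)
  have hM0 : ∀ n, ‖x n‖ ≤ M0 := fun n => (hM n).trans (le_max_left _ _)
  set K := (Submodule.span ℝ (Set.range x)).topologicalClosure with hKdef
  have hKclosed : IsClosed (K : Set H) := Submodule.isClosed_topologicalClosure _
  haveI : CompleteSpace K := hKclosed.completeSpace_coe
  have hxK : ∀ n, x n ∈ K :=
    fun n => Submodule.le_topologicalClosure _ (Submodule.subset_span (Set.mem_range_self n))
  have hsep : TopologicalSpace.IsSeparable (K : Set H) := by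
    have h1 : TopologicalSpace.IsSeparable
        ((Submodule.span ℝ (Set.range x) : Submodule ℝ H) : Set H) :=
      (Set.countable_range x).isSeparable.span
    have h2 := h1.closure
    rwa [hKdef, Submodule.topologicalClosure_coe]
  obtain ⟨c, hc_count, hc_sub⟩ := hsep
  obtain ⟨d, hd⟩ := (hc_count.insert (0:H)).exists_eq_range (Set.insert_nonempty _ _)
  have hdense : ∀ y ∈ K, ∀ ε > (0:ℝ), ∃ m : ℕ, ‖y - d m‖ < ε := by
    intro y hy ε hε
    have hyc : y ∈ closure (insert (0:H) c) :=
      closure_mono (Set.subset_insert _ _) (hc_sub hy)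
    rw [Metric.mem_closure_iff] at hyc
    obtain ⟨b, hb, hby⟩ := hyc ε hε
    rw [hd] at hb
    obtain ⟨m, rfl⟩ := hb
    exact ⟨m, by rwa [← dist_eq_norm]⟩
  set S : Set (ℕ → ℝ) := Set.univ.pi (fun m => Set.Icc (-(M0 * ‖d m‖)) (M0 * ‖d m‖)) with hSdef
  have hScomp : IsCompact S := isCompact_univ_pi fun m => isCompact_Icc
  have hgS : ∀ n, (fun m => ⟪x n, d m⟫) ∈ S := by
    intro n
    rw [hSdef, Set.mem_univ_pi]
    intro m
    have habs : |⟪x n, d m⟫| ≤ M0 * ‖d m‖ :=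
      (abs_real_inner_le_norm (x n) (d m)).trans
        (mul_le_mul_of_nonneg_right (hM0 n) (norm_nonneg _))
    exact ⟨(abs_le.1 habs).1, (abs_le.1 habs).2⟩
  obtain ⟨L, -, φ, hφ, hLconv⟩ := hScomp.isSeqCompact hgS
  have hdm : ∀ m, Tendsto (fun k => ⟪x (φ k), d m⟫) atTop (nhds (L m)) :=
    fun m => tendsto_pi_nhds.1 hLconv m
  have key : ∀ y : H, ∃ r : ℝ, Tendsto (fun k => ⟪x (φ k), y⟫) atTop (nhds r) := by
    have keyK : ∀ y ∈ K, ∃ r : ℝ, Tendsto (fun k => ⟪x (φ k), y⟫) atTop (nhds r) := by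
      intro y hy
      have hcauchy : CauchySeq (fun k => ⟪x (φ k), y⟫) := by
        rw [Metric.cauchySeq_iff']
        intro ε hε
        obtain ⟨m, hm⟩ := hdense y hy (ε / 4 / M0) (by positivity)
        have hCm : CauchySeq (fun k => ⟪x (φ k), d m⟫) := (hdm m).cauchySeq
        rw [Metric.cauchySeq_iff'] at hCm
        obtain ⟨N, hN⟩ := hCm (ε / 4) (by positivity)
        refine ⟨N, fun n hn => ?_⟩
        have hbound : ∀ j, |⟪x (φ j), y⟫ - ⟪x (φ j), d m⟫| ≤ ε / 4 := by
          intro j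
          rw [← inner_sub_right]
          refine (abs_real_inner_le_norm _ _).trans ?_
          calc ‖x (φ j)‖ * ‖y - d m‖ ≤ M0 * (ε / 4 / M0) :=
                mul_le_mul (hM0 _) hm.le (norm_nonneg _) hM0pos.le
            _ = ε / 4 := by field_simp
        have h1 := hbound n
        have h2 := hbound N
        have h3 := hN n hn
        rw [Real.dist_eq] at h3 ⊢
        have hsplit : ⟪x (φ n), y⟫ - ⟪x (φ N), y⟫ =
            (⟪x (φ n), y⟫ - ⟪x (φ n), d m⟫) + (⟪x (φ n), d m⟫ - ⟪x (φ N), d m⟫)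
              + (⟪x (φ N), d m⟫ - ⟪x (φ N), y⟫) := by ring
        rw [hsplit]
        calc |(⟪x (φ n), y⟫ - ⟪x (φ n), d m⟫) + (⟪x (φ n), d m⟫ - ⟪x (φ N), d m⟫)
              + (⟪x (φ N), d m⟫ - ⟪x (φ N), y⟫)|
            ≤ |(⟪x (φ n), y⟫ - ⟪x (φ n), d m⟫) + (⟪x (φ n), d m⟫ - ⟪x (φ N), d m⟫)|
              + |⟪x (φ N), d m⟫ - ⟪x (φ N), y⟫| := abs_add_le _ _
          _ ≤ |⟪x (φ n), y⟫ - ⟪x (φ n), d m⟫| + |⟪x (φ n), d m⟫ - ⟪x (φ N), d m⟫|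
              + |⟪x (φ N), d m⟫ - ⟪x (φ N), y⟫| := by
                have := abs_add_le (⟪x (φ n), y⟫ - ⟪x (φ n), d m⟫)
                  (⟪x (φ n), d m⟫ - ⟪x (φ N), d m⟫)
                linarith
          _ ≤ ε / 4 + ε / 4 + ε / 4 := by
                have h2' : |⟪x (φ N), d m⟫ - ⟪x (φ N), y⟫| ≤ ε / 4 := by
                  rw [abs_sub_comm]; exact h2
                linarith
          _ < ε := by linarith
      exact cauchySeq_tendsto_of_complete hcauchy
    intro y
    obtain ⟨r, hr⟩ := keyK ((K.orthogonalProjectionOnto y : H)) (K.orthogonalProjectionOnto y).2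
    refine ⟨r, ?_⟩
    have heq : ∀ k, ⟪x (φ k), y⟫ = ⟪x (φ k), (K.orthogonalProjectionOnto y : H)⟫ := by
      intro k
      have horth := Submodule.sub_starProjection_mem_orthogonal (K := K) y
      have h0 : ⟪x (φ k), y - (K.orthogonalProjectionOnto y : H)⟫ = 0 :=
        (Submodule.mem_orthogonal K _).1 horth _ (hxK _)
      rw [inner_sub_right] at h0
      linarith
    exact hr.congr fun k => (heq k).symm
  choose f hf using key
  have hadd : ∀ y z : H, f (y + z) = f y + f z := fun y z =>
    tendsto_nhds_unique (hf (y + z))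
      (by simpa [inner_add_right] using (hf y).add (hf z))
  have hsmul : ∀ (a : ℝ) (y : H), f (a • y) = a * f y := fun a y =>
    tendsto_nhds_unique (hf (a • y))
      (by simpa [real_inner_smul_right] using (hf y).const_mul a)
  have hbound : ∀ y : H, |f y| ≤ M0 * ‖y‖ := by
    intro y
    refine le_of_tendsto (hf y).abs (Eventually.of_forall fun k => ?_)
    exact (abs_real_inner_le_norm _ _).trans
      (mul_le_mul_of_nonneg_right (hM0 _) (norm_nonneg _))
  let ℓ : H →ₗ[ℝ] ℝ :=
    { toFun := f, map_add' := hadd, map_smul' := hsmul }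
  let ℓc : H →L[ℝ] ℝ := ℓ.mkContinuous M0 (fun y => by
    rw [Real.norm_eq_abs]; exact hbound y)
  refine ⟨(InnerProductSpace.toDual ℝ H).symm ℓc, φ, hφ, fun y => ?_⟩
  have hz : ⟪(InnerProductSpace.toDual ℝ H).symm ℓc, y⟫ = f y :=
    InnerProductSpace.toDual_symm_apply
  rw [hz]
  exact hf y

theorem discrete_opial_lemma
    {H : Type*} [NormedAddCommGroup H] [InnerProductSpace ℝ H] [CompleteSpace H]
    (C : Set H) (hC : C.Nonempty) (x : ℕ → H)
    (h1 : ∀ u ∈ C, ∃ l : ℝ, Tendsto (fun n => ‖x n - u‖) atTop (nhds l))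
    (h2 : ∀ z : H, (∃ φ : ℕ → ℕ, StrictMono φ ∧
        ∀ y : H, Tendsto (fun k => ⟪x (φ k), y⟫) atTop (nhds ⟪z, y⟫)) → z ∈ C) :
    ∃ xinf ∈ C, ∀ y : H, Tendsto (fun n => ⟪x n, y⟫) atTop (nhds ⟪xinf, y⟫) := by
  obtain ⟨u, hu⟩ := hC
  obtain ⟨l, hl⟩ := h1 u hu
  obtain ⟨B, hB⟩ := hl.bddAbove_range
  have hM : ∀ n, ‖x n‖ ≤ B + ‖u‖ := by
    intro n
    have h := hB (Set.mem_range_self n)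
    calc ‖x n‖ = ‖(x n - u) + u‖ := by rw [sub_add_cancel]
      _ ≤ ‖x n - u‖ + ‖u‖ := norm_add_le _ _
      _ ≤ B + ‖u‖ := by linarith [h]
  obtain ⟨z, φ, hφ, hconv⟩ := weak_bw x (B + ‖u‖) hM
  have hzC : z ∈ C := h2 z ⟨φ, hφ, hconv⟩
  -- key uniqueness: any weak cluster point equals z
  have huniq : ∀ z' : H, z' ∈ C →
      (∃ ψ : ℕ → ℕ, StrictMono ψ ∧
        ∀ y : H, Tendsto (fun k => ⟪x (ψ k), y⟫) atTop (nhds ⟪z', y⟫)) → z' = z := by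
    intro z' hz'C ⟨ψ, hψ, hconv'⟩
    obtain ⟨lz, hlz⟩ := h1 z hzC
    obtain ⟨lz', hlz'⟩ := h1 z' hz'C
    have hpt : ∀ n, ⟪x n, z' - z⟫ =
        (‖x n - z‖ ^ 2 - ‖x n - z'‖ ^ 2 + ‖z'‖ ^ 2 - ‖z‖ ^ 2) / 2 := by
      intro n
      rw [inner_sub_right, norm_sub_sq_real, norm_sub_sq_real]
      ring
    have hfull : Tendsto (fun n => ⟪x n, z' - z⟫) atTop
        (nhds ((lz * lz - lz' * lz' + ‖z'‖ ^ 2 - ‖z‖ ^ 2) / 2)) := by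
      have h := (((hlz.mul hlz).sub (hlz'.mul hlz')).add_const (‖z'‖ ^ 2)).sub_const
        (‖z‖ ^ 2) |>.div_const 2
      refine h.congr fun n => ?_
      rw [hpt n]; ring_nf
    have hc1 : ⟪z, z' - z⟫ = (lz * lz - lz' * lz' + ‖z'‖ ^ 2 - ‖z‖ ^ 2) / 2 :=
      tendsto_nhds_unique (hconv (z' - z)) (hfull.comp hφ.tendsto_atTop)
    have hc2 : ⟪z', z' - z⟫ = (lz * lz - lz' * lz' + ‖z'‖ ^ 2 - ‖z‖ ^ 2) / 2 :=
      tendsto_nhds_unique (hconv' (z' - z)) (hfull.comp hψ.tendsto_atTop)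
    have hzero : ⟪z' - z, z' - z⟫ = 0 := by
      rw [inner_sub_left]; rw [hc1, hc2]; ring
    have : z' - z = 0 := by
      rwa [inner_self_eq_zero] at hzero
    exact sub_eq_zero.1 this
  refine ⟨z, hzC, fun y => ?_⟩
  by_contra hnot
  rw [Metric.tendsto_atTop] at hnot
  push_neg at hnot
  obtain ⟨ε, hε, hfreq⟩ := hnot
  have hfreq' : ∃ᶠ n in atTop, ε ≤ dist ⟪x n, y⟫ ⟪z, y⟫ := by
    rw [frequently_atTop]
    intro N
    obtain ⟨n, hn, hd⟩ := hfreq N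
    exact ⟨n, hn, hd⟩
  obtain ⟨ψ, hψ, hψ'⟩ := extraction_of_frequently_atTop hfreq'
  obtain ⟨z', φ', hφ', hconv'⟩ := weak_bw (x ∘ ψ) (B + ‖u‖) (fun n => hM _)
  have hz'C : z' ∈ C := h2 z' ⟨ψ ∘ φ', hψ.comp hφ', fun w => hconv' w⟩
  have hz'z : z' = z := huniq z' hz'C ⟨ψ ∘ φ', hψ.comp hφ', fun w => hconv' w⟩
  have hlim : Tendsto (fun k => dist ⟪x (ψ (φ' k)), y⟫ ⟪z, y⟫) atTop (nhds 0) := by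
    have := hconv' y
    rw [hz'z] at this
    have h0 : Tendsto (fun k => ⟪x (ψ (φ' k)), y⟫ - ⟪z, y⟫) atTop (nhds 0) := by
      simpa using this.sub_const ⟪z, y⟫
    simpa [Real.dist_eq] using h0.abs
  have : ε ≤ 0 :=
    ge_of_tendsto hlim (Eventually.of_forall fun k => hψ' (φ' k))
  linarith
end

section
/- Let B : H → H be monotone and L-Lipschitz, g a monotone equilibrium bifunction on K with resolvent J_λ^g, and λ, β > 0 with λβL < 1. Fix x ∈ K, set y := J_λ^g(x - λβ B x) and x⁺ := y + λβ(Bx - By). Then for every u ∈ K, ‖x⁺ - u‖² - ‖x - u‖² ≤ 2λ g(y, u) + 2λβ⟨By, u - y⟩ - (1 - λ²β²L²)‖x - y‖². -/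
open RealInnerProductSpace

theorem fbf_one_step_estimate
    {H : Type*} [NormedAddCommGroup H] [InnerProductSpace ℝ H]
    (K : Set H) (hK : K.Nonempty) (hKc : IsClosed K) (hKconv : Convex ℝ K)
    (B : H → H) (hBmono : ∀ a b : H, 0 ≤ ⟪B a - B b, a - b⟫)
    (L : ℝ) (hLpos : 0 < L) (hBlip : ∀ a b : H, ‖B a - B b‖ ≤ L * ‖a - b‖)
    (g : H → H → ℝ)
    (hgmono : ∀ a ∈ K, ∀ b ∈ K, g a b + g b a ≤ 0)
    (hgeq : ∀ a ∈ K, g a a = 0)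
    (hgconv : ∀ a ∈ K, ConvexOn ℝ K (g a))
    (hglsc : ∀ a ∈ K, LowerSemicontinuousOn (g a) K)
    (lam beta : ℝ) (hlam : 0 < lam) (hbeta : 0 < beta) (hlb : lam * beta * L < 1)
    (x : H) (hx : x ∈ K)
    (y : H) (hyK : y ∈ K)
    (hy : ∀ v ∈ K, 0 ≤ g y v + (1 / lam) * ⟪y - (x - (lam * beta) • B x), v - y⟫)
    (xplus : H) (hxplus : xplus = y + (lam * beta) • (B x - B y)) :
    ∀ u ∈ K, ‖xplus - u‖ ^ 2 - ‖x - u‖ ^ 2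
      ≤ 2 * lam * g y u + 2 * lam * beta * ⟪B y, u - y⟫
        - (1 - lam ^ 2 * beta ^ 2 * L ^ 2) * ‖x - y‖ ^ 2 := by

  intro u hu
  have hres := hy u hu
  have hlip := hBlip x y
  have hbsq : ‖B x - B y‖ ^ 2 ≤ L ^ 2 * ‖x - y‖ ^ 2 := by
    nlinarith [norm_nonneg (B x - B y), norm_nonneg (x - y)]
  have e1 : xplus - u = (y - u) + (lam * beta) • (B x - B y) := by
    rw [hxplus]; abel
  have e2 : ‖xplus - u‖ ^ 2 = ‖y - u‖ ^ 2
      + 2 * (lam * beta) * (⟪B y, u - y⟫ - ⟪B x, u - y⟫)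
      + (lam * beta) ^ 2 * ‖B x - B y‖ ^ 2 := by
    rw [e1, norm_add_sq_real, real_inner_smul_right, norm_smul, Real.norm_eq_abs, mul_pow,
      sq_abs]
    have h : ⟪y - u, B x - B y⟫ = ⟪B y, u - y⟫ - ⟪B x, u - y⟫ := by
      rw [inner_sub_right, real_inner_comm (B y), real_inner_comm (B x), show u - y = -(y - u)
        by abel, inner_neg_right, inner_neg_right]
      ring
    rw [h]; ring
  have e3 : ‖x - u‖ ^ 2 = ‖x - y‖ ^ 2 + 2 * ⟪y - x, u - y⟫ + ‖y - u‖ ^ 2 := by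
    have : x - u = (x - y) + (y - u) := by abel
    rw [this, norm_add_sq_real]
    have h : ⟪x - y, y - u⟫ = ⟪y - x, u - y⟫ := by
      rw [show x - y = -(y - x) by abel, show y - u = -(u - y) by abel, inner_neg_neg]
    rw [h]
  have e4 : y - (x - (lam * beta) • B x) = (y - x) + (lam * beta) • B x := by abel
  rw [e4, inner_add_left, real_inner_smul_left] at hres
  have hres' : -(lam * g y u) ≤ ⟪y - x, u - y⟫ + lam * beta * ⟪B x, u - y⟫ := by
    have hl : lam ≠ 0 := ne_of_gt hlam
    have := mul_le_mul_of_nonneg_left hres (le_of_lt hlam)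
    field_simp at this
    nlinarith [this]
  have hnn : 0 ≤ (lam * beta) ^ 2 := sq_nonneg _
  rw [e2, e3]
  nlinarith [mul_le_mul_of_nonneg_left hbsq hnn]
end
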